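/- arXiv:1901.01150 — 2 statements merged into one kernel-verified Lean document; each statement's English description precedes it below -/
import Mathlib

section
/- Let j, k ≥ 1 with ℓ = n−j−k ≥ 1, and suppose f₀ : (0,∞) → [0,∞) is measurable with ∫₀ᵃ f₀(t) t^{n−j−1} dt < ∞ and ∫ₐ^∞ f₀(t) t^{k−1} dt < ∞ for some a > 0. Then for all 0 < α < β < ∞, ∫_α^β (I_{j,k} f₀)(s) ds < ∞, where (I_{j,k} f₀)(s) = (c₁/s^{n−k−2}) ∫₀ˢ (s²−r²)^{j/2−1} r^{ℓ−1} (∫_r^∞ f₀(t)(t²−r²)^{k/2−1} t dt) dr and c₁ = σ_{j−1}σ_{k−1}σ_{ℓ−1}/σ_{n−k−1}. -/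
open MeasureTheory Set ENNReal

/-- `σ_{m−1} = 2π^{m/2}/Γ(m/2)`. -/
noncomputable def sphereArea (m : ℕ) : ℝ :=
  2 * Real.pi ^ ((m : ℝ) / 2) / Real.Gamma ((m : ℝ) / 2)

/-- The mixed Radon transform of a radial profile `f₀`:
`(I_{j,k} f₀)(s) = (c₁/s^{n−k−2}) ∫₀ˢ (s²−r²)^{j/2−1} r^{ℓ−1}
  (∫_r^∞ f₀(t)(t²−r²)^{k/2−1} t dt) dr`. -/
noncomputable def Ijk (n j k ℓ : ℕ) (f₀ : ℝ → ℝ) (s : ℝ) : ℝ≥0∞ :=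
  ENNReal.ofReal
      ((sphereArea j * sphereArea k * sphereArea ℓ / sphereArea (n - k)) /
        s ^ ((n : ℝ) - k - 2)) *
    ∫⁻ r in Ioo (0:ℝ) s,
      ENNReal.ofReal ((s ^ 2 - r ^ 2) ^ ((j : ℝ) / 2 - 1) * r ^ ((ℓ : ℝ) - 1)) *
        ∫⁻ t in Ioi r, ENNReal.ofReal ((t ^ 2 - r ^ 2) ^ ((k : ℝ) / 2 - 1) * t * f₀ t)

private lemma measurable_rpowc (c : ℝ) : Measurable fun x : ℝ => x ^ c :=
  measurable_of_continuousOn_compl_singleton 0 fun x hx =>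
    (Real.continuousAt_rpow_const x c (Or.inl hx)).continuousWithinAt

private lemma lintegral_Ioo_rpow {b c : ℝ} (hb : 0 ≤ b) (hc : -1 < c) :
    ∫⁻ x in Ioo (0:ℝ) b, ENNReal.ofReal (x ^ c) = ENNReal.ofReal (b ^ (c+1) / (c+1)) := by
  have hint : IntegrableOn (fun x : ℝ => x ^ c) (Ioo 0 b) := by
    have h := (intervalIntegral.intervalIntegrable_rpow' (a := 0) (b := b) hc)
    rw [intervalIntegrable_iff_integrableOn_Ioo_of_le hb] at h
    exact h
  rw [← ofReal_integral_eq_lintegral_ofReal hint ?_]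
  · congr 1
    rw [← integral_Ioc_eq_integral_Ioo, ← intervalIntegral.integral_of_le hb,
      integral_rpow (Or.inl hc), Real.zero_rpow (by linarith), sub_zero]
  · filter_upwards [ae_restrict_mem measurableSet_Ioo] with x hx using
      Real.rpow_nonneg hx.1.le c

private lemma lintegral_Ioo_shift (r q c : ℝ) :
    ∫⁻ s in Ioo r q, ENNReal.ofReal ((s - r) ^ c)
      = ∫⁻ u in Ioo (0:ℝ) (q - r), ENNReal.ofReal (u ^ c) := by
  have h := (measurePreserving_add_right (volume : Measure ℝ) r).setLIntegral_comp_emb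
    (measurableEmbedding_addRight r) (fun s => ENNReal.ofReal ((s - r) ^ c)) (Ioo 0 (q - r))
  simp only [add_sub_cancel_right] at h
  rw [Set.image_add_const_Ioo, zero_add, sub_add_cancel] at h
  exact h.symm

private lemma lintegral_Ioo_reflect (t c : ℝ) :
    ∫⁻ x in Ioo (0:ℝ) t, ENNReal.ofReal ((t - x) ^ c)
      = ∫⁻ u in Ioo (0:ℝ) t, ENNReal.ofReal (u ^ c) := by
  have hmp : MeasurePreserving (fun x : ℝ => t - x) volume volume := by
    have h1 : MeasurePreserving (fun x : ℝ => -x) (volume : Measure ℝ) volume :=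
      Measure.measurePreserving_neg _
    have h2 := measurePreserving_add_left (volume : Measure ℝ) t
    have h3 := h2.comp h1
    simpa [Function.comp_def, sub_eq_add_neg] using h3
  have hemb : MeasurableEmbedding (fun x : ℝ => t - x) :=
    (MeasurableEquiv.subLeft t).measurableEmbedding
  have h := hmp.setLIntegral_comp_emb hemb (fun u => ENNReal.ofReal (u ^ c)) (Ioo 0 t)
  rw [Set.image_const_sub_Ioo, sub_zero, sub_self] at h
  exact h

private lemma sphereArea_pos {m : ℕ} (hm : 1 ≤ m) : 0 < sphereArea m := by
  have h : 0 < (m:ℝ)/2 := by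
    have : (1:ℝ) ≤ (m:ℝ) := by exact_mod_cast hm
    linarith
  exact div_pos (mul_pos two_pos (Real.rpow_pos_of_pos Real.pi_pos _))
    (Real.Gamma_pos_of_pos h)

set_option maxHeartbeats 2000000 in
/-- Local integrability of the mixed Radon transform of a radial profile: if
`∫₀ᵃ f₀(t) t^{n−j−1} dt < ∞` and `∫ₐ^∞ f₀(t) t^{k−1} dt < ∞`, then
`∫_α^β (I_{j,k} f₀)(s) ds < ∞` for all `0 < α < β < ∞`. -/
theorem mixed_radon_radial_loc_integrable (n j k ℓ : ℕ) (hj : 1 ≤ j) (hk : 1 ≤ k)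
    (hℓ : 1 ≤ ℓ) (hn : n = j + k + ℓ)
    (f₀ : ℝ → ℝ) (hpos : ∀ t, 0 ≤ f₀ t) (hmeas : Measurable f₀)
    (a : ℝ) (ha : 0 < a)
    (h1 : ∫⁻ t in Ioo (0:ℝ) a, ENNReal.ofReal (f₀ t * t ^ ((n : ℝ) - j - 1)) < ⊤)
    (h2 : ∫⁻ t in Ioi a, ENNReal.ofReal (f₀ t * t ^ ((k : ℝ) - 1)) < ⊤) :
    ∀ p q : ℝ, 0 < p → p < q →
      ∫⁻ s in Ioo p q, Ijk n j k ℓ f₀ s < ⊤ := by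
  intro p q hp hpq
  have hq : 0 < q := hp.trans hpq
  have hj1 : (1:ℝ) ≤ (j:ℝ) := by exact_mod_cast hj
  have hk1 : (1:ℝ) ≤ (k:ℝ) := by exact_mod_cast hk
  have hl1 : (1:ℝ) ≤ (ℓ:ℝ) := by exact_mod_cast hℓ
  have hnr : (n:ℝ) = (j:ℝ) + (k:ℝ) + (ℓ:ℝ) := by rw [hn]; push_cast; ring
  have hkcase : k = 1 ∨ 2 ≤ k := by omega
  -- the inner integral as a function
  set G : ℝ → ℝ≥0∞ :=
    fun r => ∫⁻ t in Ioi r, ENNReal.ofReal ((t ^ 2 - r ^ 2) ^ ((k:ℝ)/2 - 1) * t * f₀ t)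
    with hGdef
  have hmeas_inner : Measurable (fun z : ℝ × ℝ =>
      ENNReal.ofReal ((z.2 ^ 2 - z.1 ^ 2) ^ ((k:ℝ)/2 - 1) * z.2 * f₀ z.2)) := by
    apply Measurable.ennreal_ofReal
    exact (((measurable_rpowc _).comp
      ((measurable_snd.pow_const 2).sub (measurable_fst.pow_const 2))).mul
      measurable_snd).mul (hmeas.comp measurable_snd)
  have hGmeas : Measurable G := by
    rw [hGdef]
    have heq : ∀ r : ℝ, (∫⁻ t in Ioi r,
        ENNReal.ofReal ((t ^ 2 - r ^ 2) ^ ((k:ℝ)/2 - 1) * t * f₀ t))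
        = ∫⁻ t, (fun z : ℝ × ℝ => if z.1 < z.2 then
            ENNReal.ofReal ((z.2 ^ 2 - z.1 ^ 2) ^ ((k:ℝ)/2 - 1) * z.2 * f₀ z.2) else 0)
          (r, t) := by
      intro r
      rw [← lintegral_indicator measurableSet_Ioi]
      refine lintegral_congr fun t => ?_
      simp [Set.indicator_apply, mem_Ioi]
    simp only [heq]
    exact Measurable.lintegral_prod_right'
      (Measurable.ite (measurableSet_lt measurable_fst measurable_snd) hmeas_inner
        measurable_const)
  -- the constant in front
  set c₁ : ℝ := sphereArea j * sphereArea k * sphereArea ℓ / sphereArea (n - k) with hc₁def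
  have hc₁0 : 0 ≤ c₁ := by
    rw [hc₁def]
    have h1' := sphereArea_pos hj
    have h2' := sphereArea_pos hk
    have h3' := sphereArea_pos hℓ
    have h4' := sphereArea_pos (m := n - k) (by omega)
    positivity
  have hE0 : 0 ≤ (n:ℝ) - (k:ℝ) - 2 := by rw [hnr]; linarith
  have goal_eq : ∀ s : ℝ, Ijk n j k ℓ f₀ s
      = ENNReal.ofReal (c₁ / s ^ ((n:ℝ) - (k:ℝ) - 2)) *
        ∫⁻ r in Ioo (0:ℝ) s,
          ENNReal.ofReal ((s ^ 2 - r ^ 2) ^ ((j:ℝ)/2 - 1) * r ^ ((ℓ:ℝ) - 1)) * G r := by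
    intro s
    rw [hGdef, hc₁def]
    rfl

  -- helper for rpow arithmetic
  have sq_rpow : ∀ {t : ℝ}, 0 ≤ t → ∀ y : ℝ, ((t^2:ℝ)) ^ y = t ^ (2*y) := by
    intro t ht y
    rw [Real.rpow_mul ht 2 y, show (2:ℝ) = ((2:ℕ):ℝ) by norm_num, Real.rpow_natCast]
  -- the kernel for the double integral in (s, r)
  set H : ℝ × ℝ → ℝ≥0∞ := fun z =>
    if 0 < z.2 ∧ z.2 < z.1 then
      ENNReal.ofReal ((z.1 ^ 2 - z.2 ^ 2) ^ ((j:ℝ)/2 - 1) * z.2 ^ ((ℓ:ℝ) - 1)) * G z.2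
    else 0 with hHdef
  have hHmeas : Measurable H := by
    rw [hHdef]
    refine Measurable.ite ?_ ?_ measurable_const
    · exact (measurableSet_lt measurable_const measurable_snd).inter
        (measurableSet_lt measurable_snd measurable_fst)
    · refine Measurable.mul ?_ (hGmeas.comp measurable_snd)
      apply Measurable.ennreal_ofReal
      exact ((measurable_rpowc _).comp
        ((measurable_fst.pow_const 2).sub (measurable_snd.pow_const 2))).mul
        ((measurable_rpowc _).comp measurable_snd)
  have h23 : (∫⁻ s in Ioo p q, ∫⁻ r in Ioo (0:ℝ) s,
        ENNReal.ofReal ((s ^ 2 - r ^ 2) ^ ((j:ℝ)/2 - 1) * r ^ ((ℓ:ℝ) - 1)) * G r)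
      = ∫⁻ r in Ioo (0:ℝ) q, ∫⁻ s in Ioo p q, H (s, r) := by
    rw [← lintegral_lintegral_swap (f := fun s r => H (s, r)) hHmeas.aemeasurable]
    apply setLIntegral_congr_fun measurableSet_Ioo
    intro s hs
    beta_reduce
    have hfun : (fun r => H (s, r)) = (Ioo (0:ℝ) s).indicator
        (fun r => ENNReal.ofReal ((s ^ 2 - r ^ 2) ^ ((j:ℝ)/2 - 1) * r ^ ((ℓ:ℝ) - 1)) * G r) := by
      funext r
      simp [hHdef, Set.indicator_apply, mem_Ioo]
    rw [hfun, lintegral_indicator measurableSet_Ioo,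
      Measure.restrict_restrict measurableSet_Ioo,
      inter_eq_self_of_subset_left (Ioo_subset_Ioo_right hs.2.le)]
  -- uniform bound for the s-integral
  set C₁ : ℝ≥0∞ := ENNReal.ofReal ((q^2) ^ ((j:ℝ)/2 - 1) * (q - p))
      + ENNReal.ofReal (p ^ ((j:ℝ)/2 - 1) * (q ^ ((j:ℝ)/2) / ((j:ℝ)/2))) with hC₁def
  have hC₁ne : C₁ ≠ ⊤ := by
    rw [hC₁def]
    exact (ENNReal.add_lt_top.mpr ⟨ofReal_lt_top, ofReal_lt_top⟩).ne
  have hjcase : j = 1 ∨ 2 ≤ j := by omega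
  have hC1 : ∀ r ∈ Ioo (0:ℝ) q,
      (∫⁻ s in Ioo (max p r) q, ENNReal.ofReal ((s^2 - r^2) ^ ((j:ℝ)/2 - 1))) ≤ C₁ := by
    intro r hr
    rcases hjcase with hj1' | hj2
    · -- j = 1
      rw [hC₁def]
      refine le_trans ?_ le_add_self
      have hjR : (j:ℝ) = 1 := by rw [hj1']; norm_num
      have he : (j:ℝ)/2 - 1 = -(1/2 : ℝ) := by rw [hjR]; norm_num
      simp only [he]
      calc ∫⁻ s in Ioo (max p r) q, ENNReal.ofReal ((s^2 - r^2) ^ (-(1/2 : ℝ)))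
          ≤ ∫⁻ s in Ioo (max p r) q,
              ENNReal.ofReal (p ^ (-(1/2 : ℝ)) * (s - r) ^ (-(1/2 : ℝ))) := by
            refine setLIntegral_mono' measurableSet_Ioo fun s hs => ofReal_le_ofReal ?_
            have hps : p < s := lt_of_le_of_lt (le_max_left p r) hs.1
            have hrs : r < s := lt_of_le_of_lt (le_max_right p r) hs.1
            have h1' : 0 < p * (s - r) := mul_pos hp (by linarith)
            have h2' : p * (s - r) ≤ s^2 - r^2 := by nlinarith [hr.1]
            refine le_trans (Real.rpow_le_rpow_of_nonpos h1' h2' (by norm_num)) ?_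
            rw [Real.mul_rpow hp.le (by linarith : (0:ℝ) ≤ s - r)]
        _ ≤ ∫⁻ s in Ioo r q, ENNReal.ofReal (p ^ (-(1/2 : ℝ)) * (s - r) ^ (-(1/2 : ℝ))) :=
            lintegral_mono_set (Ioo_subset_Ioo_left (le_max_right p r))
        _ = ENNReal.ofReal (p ^ (-(1/2 : ℝ)))
              * ∫⁻ s in Ioo r q, ENNReal.ofReal ((s - r) ^ (-(1/2 : ℝ))) := by
            simp_rw [ENNReal.ofReal_mul (by positivity : (0:ℝ) ≤ p ^ (-(1/2 : ℝ)))]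
            exact lintegral_const_mul' _ _ ofReal_ne_top
        _ = ENNReal.ofReal (p ^ (-(1/2 : ℝ)))
              * ENNReal.ofReal ((q - r) ^ ((-(1/2 : ℝ)) + 1) / ((-(1/2 : ℝ)) + 1)) := by
            rw [lintegral_Ioo_shift,
              lintegral_Ioo_rpow (by linarith [hr.2] : (0:ℝ) ≤ q - r) (by norm_num)]
        _ ≤ ENNReal.ofReal (p ^ (-(1/2 : ℝ)) * (q ^ ((j:ℝ)/2) / ((j:ℝ)/2))) := by
            rw [← ENNReal.ofReal_mul (by positivity)]
            apply ofReal_le_ofReal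
            rw [show (j:ℝ)/2 = (1:ℝ)/2 by rw [hjR],
              show (-(1/2 : ℝ)) + 1 = (1:ℝ)/2 by norm_num]
            gcongr
            · linarith [hr.2]
            · linarith [hr.1]
    · -- 2 ≤ j
      rw [hC₁def]
      refine le_trans ?_ le_self_add
      have hj2R : (2:ℝ) ≤ (j:ℝ) := by exact_mod_cast hj2
      have hje : 0 ≤ (j:ℝ)/2 - 1 := by linarith
      calc ∫⁻ s in Ioo (max p r) q, ENNReal.ofReal ((s^2 - r^2) ^ ((j:ℝ)/2 - 1))
          ≤ ∫⁻ s in Ioo (max p r) q, ENNReal.ofReal ((q^2) ^ ((j:ℝ)/2 - 1)) := by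
            refine setLIntegral_mono' measurableSet_Ioo fun s hs => ofReal_le_ofReal ?_
            have hrs : r < s := lt_of_le_of_lt (le_max_right p r) hs.1
            have hs0 : 0 < s := lt_of_le_of_lt hr.1.le hrs
            exact Real.rpow_le_rpow (by nlinarith [hr.1]) (by nlinarith [hs.2]) hje
        _ = ENNReal.ofReal ((q^2) ^ ((j:ℝ)/2 - 1)) * volume (Ioo (max p r) q) :=
            setLIntegral_const _ _
        _ ≤ ENNReal.ofReal ((q^2) ^ ((j:ℝ)/2 - 1)) * ENNReal.ofReal (q - p) := by
            rw [Real.volume_Ioo]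
            exact mul_le_mul_right (ofReal_le_ofReal
              (sub_le_sub_left (le_max_left p r) q)) _
        _ = ENNReal.ofReal ((q^2) ^ ((j:ℝ)/2 - 1) * (q - p)) :=
            (ENNReal.ofReal_mul (by positivity)).symm
  have h45 : ∀ r ∈ Ioo (0:ℝ) q, (∫⁻ s in Ioo p q, H (s, r))
      ≤ C₁ * (ENNReal.ofReal (r ^ ((ℓ:ℝ) - 1)) * G r) := by
    intro r hr
    have hfun : (fun s => H (s, r)) = (Ioi r).indicator
        (fun s => ENNReal.ofReal ((s ^ 2 - r ^ 2) ^ ((j:ℝ)/2 - 1) * r ^ ((ℓ:ℝ) - 1)) * G r) := by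
      funext s
      simp [hHdef, Set.indicator_apply, mem_Ioi, hr.1]
    rw [hfun, lintegral_indicator measurableSet_Ioi,
      Measure.restrict_restrict measurableSet_Ioi]
    have hset : Ioi r ∩ Ioo p q = Ioo (max p r) q := by
      ext s
      simp only [mem_inter_iff, mem_Ioi, mem_Ioo, max_lt_iff]
      tauto
    rw [hset]
    have hsplit : ∀ s ∈ Ioo (max p r) q,
        ENNReal.ofReal ((s ^ 2 - r ^ 2) ^ ((j:ℝ)/2 - 1) * r ^ ((ℓ:ℝ) - 1)) * G r
        = ENNReal.ofReal ((s ^ 2 - r ^ 2) ^ ((j:ℝ)/2 - 1))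
            * (ENNReal.ofReal (r ^ ((ℓ:ℝ) - 1)) * G r) := by
      intro s hs
      have hrs : r < s := lt_of_le_of_lt (le_max_right p r) hs.1
      rw [ENNReal.ofReal_mul (Real.rpow_nonneg (by nlinarith [hr.1] : (0:ℝ) ≤ s^2 - r^2) _),
        mul_assoc]
    rw [setLIntegral_congr_fun measurableSet_Ioo hsplit]
    have hf : Measurable (fun x : ℝ => ENNReal.ofReal ((x^2 - r^2) ^ ((j:ℝ)/2 - 1))) :=
      (((measurable_rpowc _).comp
        ((measurable_id.pow_const 2).sub measurable_const)).ennreal_ofReal)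
    rw [lintegral_mul_const (f := fun x : ℝ => ENNReal.ofReal ((x^2 - r^2) ^ ((j:ℝ)/2 - 1)))
      _ hf]
    exact mul_le_mul_left (hC1 r hr) _

  -- kernel for the (r, t) double integral
  set Ψ : ℝ × ℝ → ℝ≥0∞ := fun z =>
    if z.1 < z.2 then
      ENNReal.ofReal (z.1 ^ ((ℓ:ℝ) - 1) * ((z.2 ^ 2 - z.1 ^ 2) ^ ((k:ℝ)/2 - 1) * (z.2 * f₀ z.2)))
    else 0 with hΨdef
  have hΨmeas : Measurable Ψ := by
    rw [hΨdef]
    refine Measurable.ite (measurableSet_lt measurable_fst measurable_snd) ?_ measurable_const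
    apply Measurable.ennreal_ofReal
    exact ((measurable_rpowc _).comp measurable_fst).mul
      ((((measurable_rpowc _).comp
        ((measurable_snd.pow_const 2).sub (measurable_fst.pow_const 2)))).mul
        (measurable_snd.mul (hmeas.comp measurable_snd)))
  have h6 : (∫⁻ r in Ioo (0:ℝ) q, ENNReal.ofReal (r ^ ((ℓ:ℝ) - 1)) * G r)
      = ∫⁻ t in Ioi (0:ℝ), ∫⁻ r in Ioo (0:ℝ) q, Ψ (r, t) := by
    rw [← lintegral_lintegral_swap (f := fun r t => Ψ (r, t)) hΨmeas.aemeasurable]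
    apply setLIntegral_congr_fun measurableSet_Ioo
    intro r hr
    beta_reduce
    have hfun : (fun t => Ψ (r, t)) = (Ioi r).indicator
        (fun t => ENNReal.ofReal (r ^ ((ℓ:ℝ) - 1)
          * ((t ^ 2 - r ^ 2) ^ ((k:ℝ)/2 - 1) * (t * f₀ t)))) := by
      funext t
      simp [hΨdef, Set.indicator_apply, mem_Ioi]
    rw [hfun, lintegral_indicator measurableSet_Ioi,
      Measure.restrict_restrict measurableSet_Ioi,
      inter_eq_self_of_subset_left (Ioi_subset_Ioi hr.1.le), hGdef]
    rw [← lintegral_const_mul' _ _ ofReal_ne_top]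
    apply setLIntegral_congr_fun measurableSet_Ioi
    intro t ht
    beta_reduce
    rw [← ENNReal.ofReal_mul (Real.rpow_nonneg hr.1.le _)]
    congr 1
    ring
  have hJmeas : ∀ t : ℝ, Measurable (fun r : ℝ =>
      ENNReal.ofReal (r ^ ((ℓ:ℝ) - 1) * ((t ^ 2 - r ^ 2) ^ ((k:ℝ)/2 - 1)))) := by
    intro t
    exact ((measurable_rpowc _).mul
      ((measurable_rpowc _).comp (measurable_const.sub (measurable_id.pow_const 2)))).ennreal_ofReal
  have h7 : ∀ t : ℝ, 0 < t → (∫⁻ r in Ioo (0:ℝ) q, Ψ (r, t))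
      = (∫⁻ r in Ioo (0:ℝ) (min t q),
          ENNReal.ofReal (r ^ ((ℓ:ℝ) - 1) * ((t ^ 2 - r ^ 2) ^ ((k:ℝ)/2 - 1))))
        * ENNReal.ofReal (t * f₀ t) := by
    intro t ht
    have hfun : (fun r => Ψ (r, t)) = (Iio t).indicator
        (fun r => ENNReal.ofReal (r ^ ((ℓ:ℝ) - 1)
          * ((t ^ 2 - r ^ 2) ^ ((k:ℝ)/2 - 1) * (t * f₀ t)))) := by
      funext r
      simp [hΨdef, Set.indicator_apply, mem_Iio]
    rw [hfun, lintegral_indicator measurableSet_Iio,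
      Measure.restrict_restrict measurableSet_Iio]
    have hset : Iio t ∩ Ioo (0:ℝ) q = Ioo (0:ℝ) (min t q) := by
      ext x
      simp only [mem_inter_iff, mem_Iio, mem_Ioo, lt_min_iff]
      tauto
    rw [hset, ← lintegral_mul_const (f := fun r : ℝ =>
      ENNReal.ofReal (r ^ ((ℓ:ℝ) - 1) * ((t ^ 2 - r ^ 2) ^ ((k:ℝ)/2 - 1)))) _ (hJmeas t)]
    apply setLIntegral_congr_fun measurableSet_Ioo
    intro r hr
    beta_reduce
    have hrt : r < t := lt_of_lt_of_le hr.2 (min_le_left t q)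
    have h0 : 0 ≤ r ^ ((ℓ:ℝ) - 1) * ((t ^ 2 - r ^ 2) ^ ((k:ℝ)/2 - 1)) :=
      mul_nonneg (Real.rpow_nonneg hr.1.le _)
        (Real.rpow_nonneg (by nlinarith [hr.1] : (0:ℝ) ≤ t^2 - r^2) _)
    rw [← ENNReal.ofReal_mul h0]
    congr 1
    ring
  have hl0 : (0:ℝ) ≤ (ℓ:ℝ) - 1 := by linarith
  have hJsmall : ∀ t : ℝ, 0 < t →
      (∫⁻ r in Ioo (0:ℝ) (min t q),
          ENNReal.ofReal (r ^ ((ℓ:ℝ) - 1) * ((t ^ 2 - r ^ 2) ^ ((k:ℝ)/2 - 1))))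
        ≤ ENNReal.ofReal (2 * t ^ ((ℓ:ℝ) + (k:ℝ) - 2)) := by
    intro t ht
    rcases hkcase with hk1' | hk2
    · -- k = 1
      have hkR : (k:ℝ) = 1 := by rw [hk1']; norm_num
      have hκ : (k:ℝ)/2 - 1 = -(1/2 : ℝ) := by rw [hkR]; norm_num
      simp only [hκ]
      calc (∫⁻ r in Ioo (0:ℝ) (min t q),
              ENNReal.ofReal (r ^ ((ℓ:ℝ) - 1) * ((t ^ 2 - r ^ 2) ^ (-(1/2 : ℝ)))))
          ≤ ∫⁻ r in Ioo (0:ℝ) t,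
              ENNReal.ofReal ((t ^ ((ℓ:ℝ) - 1) * t ^ (-(1/2 : ℝ))) * (t - r) ^ (-(1/2 : ℝ))) := by
            refine le_trans (lintegral_mono_set (Ioo_subset_Ioo_right (min_le_left t q)))
              (setLIntegral_mono' measurableSet_Ioo fun r hr => ofReal_le_ofReal ?_)
            have h1' : r ^ ((ℓ:ℝ) - 1) ≤ t ^ ((ℓ:ℝ) - 1) :=
              Real.rpow_le_rpow hr.1.le hr.2.le hl0
            have hfac : t ^ 2 - r ^ 2 = (t - r) * (t + r) := by ring
            have h2' : (t ^ 2 - r ^ 2) ^ (-(1/2 : ℝ))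
                ≤ (t - r) ^ (-(1/2 : ℝ)) * t ^ (-(1/2 : ℝ)) := by
              rw [hfac, Real.mul_rpow (by linarith [hr.2] : (0:ℝ) ≤ t - r)
                (by linarith [hr.1] : (0:ℝ) ≤ t + r)]
              refine mul_le_mul_of_nonneg_left ?_ (Real.rpow_nonneg (by linarith [hr.2]) _)
              exact Real.rpow_le_rpow_of_nonpos ht (by linarith [hr.1]) (by norm_num)
            calc r ^ ((ℓ:ℝ) - 1) * ((t ^ 2 - r ^ 2) ^ (-(1/2 : ℝ)))
                ≤ t ^ ((ℓ:ℝ) - 1) * ((t - r) ^ (-(1/2 : ℝ)) * t ^ (-(1/2 : ℝ))) :=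
                  mul_le_mul h1' h2'
                    (Real.rpow_nonneg (by nlinarith [hr.1, hr.2] : (0:ℝ) ≤ t^2 - r^2) _)
                    (Real.rpow_nonneg ht.le _)
              _ = (t ^ ((ℓ:ℝ) - 1) * t ^ (-(1/2 : ℝ))) * (t - r) ^ (-(1/2 : ℝ)) := by ring
        _ = ENNReal.ofReal (t ^ ((ℓ:ℝ) - 1) * t ^ (-(1/2 : ℝ)))
              * ∫⁻ r in Ioo (0:ℝ) t, ENNReal.ofReal ((t - r) ^ (-(1/2 : ℝ))) := by
            simp_rw [ENNReal.ofReal_mul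
              (by positivity : (0:ℝ) ≤ t ^ ((ℓ:ℝ) - 1) * t ^ (-(1/2 : ℝ)))]
            exact lintegral_const_mul' _ _ ofReal_ne_top
        _ = ENNReal.ofReal (t ^ ((ℓ:ℝ) - 1) * t ^ (-(1/2 : ℝ)))
              * ENNReal.ofReal (t ^ ((-(1/2 : ℝ)) + 1) / ((-(1/2 : ℝ)) + 1)) := by
            rw [lintegral_Ioo_reflect, lintegral_Ioo_rpow ht.le (by norm_num)]
        _ ≤ ENNReal.ofReal (2 * t ^ ((ℓ:ℝ) + (k:ℝ) - 2)) := by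
            rw [← ENNReal.ofReal_mul (by positivity)]
            apply ofReal_le_ofReal
            apply le_of_eq
            rw [show (-(1/2 : ℝ)) + 1 = (1/2 : ℝ) by norm_num]
            have e1 : t ^ (-(1/2 : ℝ)) * t ^ ((1/2):ℝ) = 1 := by
              rw [← Real.rpow_add ht]
              norm_num
            have e2 : (ℓ:ℝ) + (k:ℝ) - 2 = (ℓ:ℝ) - 1 := by rw [hkR]; ring
            rw [e2]
            calc t ^ ((ℓ:ℝ) - 1) * t ^ (-(1/2 : ℝ)) * (t ^ ((1/2):ℝ) / (1/2 : ℝ))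
                = t ^ ((ℓ:ℝ) - 1) * (t ^ (-(1/2 : ℝ)) * t ^ ((1/2):ℝ)) * 2 := by ring
              _ = 2 * t ^ ((ℓ:ℝ) - 1) := by rw [e1]; ring
    · -- 2 ≤ k
      have hk2R : (2:ℝ) ≤ (k:ℝ) := by exact_mod_cast hk2
      have hκ0 : 0 ≤ (k:ℝ)/2 - 1 := by linarith
      calc (∫⁻ r in Ioo (0:ℝ) (min t q),
              ENNReal.ofReal (r ^ ((ℓ:ℝ) - 1) * ((t ^ 2 - r ^ 2) ^ ((k:ℝ)/2 - 1))))
          ≤ ∫⁻ r in Ioo (0:ℝ) (min t q),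
              ENNReal.ofReal (t ^ ((ℓ:ℝ) - 1) * (t ^ 2) ^ ((k:ℝ)/2 - 1)) := by
            refine setLIntegral_mono' measurableSet_Ioo fun r hr => ofReal_le_ofReal ?_
            have hrt : r < t := lt_of_lt_of_le hr.2 (min_le_left t q)
            exact mul_le_mul (Real.rpow_le_rpow hr.1.le hrt.le hl0)
              (Real.rpow_le_rpow (by nlinarith [hr.1]) (by nlinarith [hr.1]) hκ0)
              (Real.rpow_nonneg (by nlinarith [hr.1]) _)
              (Real.rpow_nonneg ht.le _)
        _ = ENNReal.ofReal (t ^ ((ℓ:ℝ) - 1) * (t ^ 2) ^ ((k:ℝ)/2 - 1))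
              * volume (Ioo (0:ℝ) (min t q)) := setLIntegral_const _ _
        _ ≤ ENNReal.ofReal (t ^ ((ℓ:ℝ) - 1) * (t ^ 2) ^ ((k:ℝ)/2 - 1)) * ENNReal.ofReal t := by
            rw [Real.volume_Ioo]
            refine mul_le_mul_right (ofReal_le_ofReal ?_) _
            have := min_le_left t q
            linarith
        _ ≤ ENNReal.ofReal (2 * t ^ ((ℓ:ℝ) + (k:ℝ) - 2)) := by
            rw [← ENNReal.ofReal_mul (by positivity)]
            apply ofReal_le_ofReal
            have h' : t ^ ((ℓ:ℝ) + (k:ℝ) - 2)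
                = t ^ ((ℓ:ℝ) - 1) * t ^ (2*((k:ℝ)/2 - 1)) * t ^ (1:ℝ) := by
              rw [← Real.rpow_add ht, ← Real.rpow_add ht]
              congr 1
              ring
            rw [sq_rpow ht.le, h', Real.rpow_one]
            nlinarith [mul_nonneg (mul_nonneg (Real.rpow_nonneg ht.le ((ℓ:ℝ) - 1))
              (Real.rpow_nonneg ht.le (2*((k:ℝ)/2 - 1)))) ht.le]
  set M : ℝ := max a (2*q) with hMdef
  have hqM : q ≤ M := le_trans (by linarith) (le_max_right a (2*q))
  have haM : a ≤ M := le_max_left _ _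
  have hMpos : 0 < M := lt_of_lt_of_le ha haM
  have hJlarge : ∀ t : ℝ, M < t →
      (∫⁻ r in Ioo (0:ℝ) (min t q),
          ENNReal.ofReal (r ^ ((ℓ:ℝ) - 1) * ((t ^ 2 - r ^ 2) ^ ((k:ℝ)/2 - 1))))
        ≤ ENNReal.ofReal ((2 * (q ^ (ℓ:ℝ) / (ℓ:ℝ))) * t ^ ((k:ℝ) - 2)) := by
    intro t htM
    have hqt : q < t := lt_of_le_of_lt hqM htM
    have ht : 0 < t := hq.trans hqt
    have h2qt : 2*q < t := lt_of_le_of_lt (le_max_right a (2*q)) htM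
    have hmin : min t q = q := min_eq_right hqt.le
    rw [hmin]
    have hpt : ∀ r ∈ Ioo (0:ℝ) q,
        r ^ ((ℓ:ℝ) - 1) * ((t ^ 2 - r ^ 2) ^ ((k:ℝ)/2 - 1))
          ≤ r ^ ((ℓ:ℝ) - 1) * (2 * t ^ ((k:ℝ) - 2)) := by
      intro r hr
      refine mul_le_mul_of_nonneg_left ?_ (Real.rpow_nonneg hr.1.le _)
      rcases hkcase with hk1' | hk2
      · have hkR : (k:ℝ) = 1 := by rw [hk1']; norm_num
        have hκ : (k:ℝ)/2 - 1 = -(1/2 : ℝ) := by rw [hkR]; norm_num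
        rw [hκ]
        have hbase : t^2/4 ≤ t^2 - r^2 := by nlinarith [hr.1, hr.2]
        have h4 : (0:ℝ) < t^2/4 := by positivity
        refine le_trans (Real.rpow_le_rpow_of_nonpos h4 hbase (by norm_num)) ?_
        have e1 : (t^2/4 : ℝ) = (t/2)^2 := by ring
        rw [e1, sq_rpow (by positivity : (0:ℝ) ≤ t/2),
          show 2 * (-(1/2 : ℝ)) = -1 by norm_num, Real.rpow_neg_one,
          show (k:ℝ) - 2 = -1 by rw [hkR]; ring, Real.rpow_neg_one, inv_div,
          div_eq_mul_inv]
      · have hk2R : (2:ℝ) ≤ (k:ℝ) := by exact_mod_cast hk2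
        have hκ0 : 0 ≤ (k:ℝ)/2 - 1 := by linarith
        have h1' : (t ^ 2 - r ^ 2) ^ ((k:ℝ)/2 - 1) ≤ ((t^2:ℝ)) ^ ((k:ℝ)/2 - 1) :=
          Real.rpow_le_rpow (by nlinarith [hr.1, hr.2]) (by nlinarith [hr.1]) hκ0
        have h2' : ((t^2:ℝ)) ^ ((k:ℝ)/2 - 1) = t ^ ((k:ℝ) - 2) := by
          rw [sq_rpow ht.le]
          congr 1
          ring
        have h3' : (0:ℝ) ≤ t ^ ((k:ℝ) - 2) := Real.rpow_nonneg ht.le _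
        rw [h2'] at h1'
        linarith
    calc (∫⁻ r in Ioo (0:ℝ) q,
            ENNReal.ofReal (r ^ ((ℓ:ℝ) - 1) * ((t ^ 2 - r ^ 2) ^ ((k:ℝ)/2 - 1))))
        ≤ ∫⁻ r in Ioo (0:ℝ) q,
            ENNReal.ofReal (r ^ ((ℓ:ℝ) - 1) * (2 * t ^ ((k:ℝ) - 2))) :=
          setLIntegral_mono' measurableSet_Ioo fun r hr => ofReal_le_ofReal (hpt r hr)
      _ = (∫⁻ r in Ioo (0:ℝ) q, ENNReal.ofReal (r ^ ((ℓ:ℝ) - 1)))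
            * ENNReal.ofReal (2 * t ^ ((k:ℝ) - 2)) := by
          rw [← lintegral_mul_const (f := fun r : ℝ => ENNReal.ofReal (r ^ ((ℓ:ℝ) - 1))) _
            ((measurable_rpowc _).ennreal_ofReal)]
          apply setLIntegral_congr_fun measurableSet_Ioo
          intro r hr
          beta_reduce
          rw [← ENNReal.ofReal_mul (Real.rpow_nonneg hr.1.le _)]
      _ = ENNReal.ofReal (q ^ (((ℓ:ℝ) - 1) + 1) / (((ℓ:ℝ) - 1) + 1))
            * ENNReal.ofReal (2 * t ^ ((k:ℝ) - 2)) := by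
          rw [lintegral_Ioo_rpow hq.le (by linarith)]
      _ ≤ ENNReal.ofReal ((2 * (q ^ (ℓ:ℝ) / (ℓ:ℝ))) * t ^ ((k:ℝ) - 2)) := by
          rw [← ENNReal.ofReal_mul (by positivity)]
          apply ofReal_le_ofReal
          apply le_of_eq
          rw [show ((ℓ:ℝ) - 1) + 1 = (ℓ:ℝ) by ring]
          ring
  set C₃ : ℝ := 2 * M ^ (ℓ:ℝ) + 2 * (q ^ (ℓ:ℝ) / (ℓ:ℝ)) with hC₃def
  have hql0 : (0:ℝ) ≤ q ^ (ℓ:ℝ) / (ℓ:ℝ) := by positivity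
  have hC₃0 : 0 ≤ C₃ := by
    rw [hC₃def]
    positivity
  have two_ofReal : ∀ x : ℝ, ENNReal.ofReal (2 * x) = 2 * ENNReal.ofReal x := by
    intro x
    rw [ENNReal.ofReal_mul (by norm_num)]
    simp
  have hfin : (∫⁻ t in Ioi (0:ℝ), ∫⁻ r in Ioo (0:ℝ) q, Ψ (r, t)) < ⊤ := by
    rw [← Ioo_union_Ici_eq_Ioi ha]
    refine lt_of_le_of_lt (lintegral_union_le _ _ _) ?_
    rw [ENNReal.add_lt_top]
    constructor
    · -- small t
      have hb : ∀ t ∈ Ioo (0:ℝ) a, (∫⁻ r in Ioo (0:ℝ) q, Ψ (r, t))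
          ≤ 2 * ENNReal.ofReal (f₀ t * t ^ ((n:ℝ) - j - 1)) := by
        intro t ht
        have ht0 : 0 < t := ht.1
        rw [h7 t ht.1]
        calc _ ≤ ENNReal.ofReal (2 * t ^ ((ℓ:ℝ) + (k:ℝ) - 2)) * ENNReal.ofReal (t * f₀ t) :=
              mul_le_mul_left (hJsmall t ht.1) _
          _ = 2 * ENNReal.ofReal (f₀ t * t ^ ((n:ℝ) - j - 1)) := by
              rw [← ENNReal.ofReal_mul (by positivity)]
              have e4 : 2 * t ^ ((ℓ:ℝ) + (k:ℝ) - 2) * (t * f₀ t)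
                  = 2 * (f₀ t * t ^ ((n:ℝ) - (j:ℝ) - 1)) := by
                have h' : t ^ ((n:ℝ) - (j:ℝ) - 1)
                    = t ^ ((ℓ:ℝ) + (k:ℝ) - 2) * t ^ (1:ℝ) := by
                  rw [← Real.rpow_add ht.1]
                  congr 1
                  rw [hnr]
                  ring
                rw [h', Real.rpow_one]
                ring
              rw [e4, two_ofReal]
      calc (∫⁻ t in Ioo (0:ℝ) a, ∫⁻ r in Ioo (0:ℝ) q, Ψ (r, t))
          ≤ ∫⁻ t in Ioo (0:ℝ) a, 2 * ENNReal.ofReal (f₀ t * t ^ ((n:ℝ) - j - 1)) :=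
            setLIntegral_mono' measurableSet_Ioo hb
        _ = 2 * ∫⁻ t in Ioo (0:ℝ) a, ENNReal.ofReal (f₀ t * t ^ ((n:ℝ) - j - 1)) :=
            lintegral_const_mul' _ _ (by norm_num)
        _ < ⊤ := ENNReal.mul_lt_top (by norm_num) h1
    · -- large t
      have hb : ∀ t ∈ Ici a, (∫⁻ r in Ioo (0:ℝ) q, Ψ (r, t))
          ≤ ENNReal.ofReal C₃ * ENNReal.ofReal (f₀ t * t ^ ((k:ℝ) - 1)) := by
        intro t ht
        have ht0 : 0 < t := lt_of_lt_of_le ha ht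
        rw [h7 t ht0]
        have hpow1 : t ^ ((ℓ:ℝ) + (k:ℝ) - 2) * t = t ^ (ℓ:ℝ) * t ^ ((k:ℝ) - 1) := by
          have h' : t ^ (ℓ:ℝ) * t ^ ((k:ℝ) - 1)
              = t ^ ((ℓ:ℝ) + (k:ℝ) - 2) * t ^ (1:ℝ) := by
            rw [← Real.rpow_add ht0, ← Real.rpow_add ht0]
            congr 1
            ring
          rw [h', Real.rpow_one]
        have hpow2 : t ^ ((k:ℝ) - 2) * t = t ^ ((k:ℝ) - 1) := by
          have h' : t ^ ((k:ℝ) - 1) = t ^ ((k:ℝ) - 2) * t ^ (1:ℝ) := by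
            rw [← Real.rpow_add ht0]
            congr 1
            ring
          rw [h', Real.rpow_one]
        have key : (∫⁻ r in Ioo (0:ℝ) (min t q),
              ENNReal.ofReal (r ^ ((ℓ:ℝ) - 1) * ((t ^ 2 - r ^ 2) ^ ((k:ℝ)/2 - 1))))
              * ENNReal.ofReal t ≤ ENNReal.ofReal (C₃ * t ^ ((k:ℝ) - 1)) := by
          rcases le_or_gt t M with hcase | hcase
          · refine le_trans (mul_le_mul_left (hJsmall t ht0) _) ?_
            rw [← ENNReal.ofReal_mul (by positivity)]
            apply ofReal_le_ofReal
            have htM : t ^ (ℓ:ℝ) ≤ M ^ (ℓ:ℝ) :=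
              Real.rpow_le_rpow ht0.le hcase (by linarith)
            have h3' : (0:ℝ) ≤ t ^ ((k:ℝ) - 1) := Real.rpow_nonneg ht0.le _
            calc 2 * t ^ ((ℓ:ℝ) + (k:ℝ) - 2) * t
                = (2 * t ^ (ℓ:ℝ)) * t ^ ((k:ℝ) - 1) := by
                  rw [mul_assoc, hpow1]
                  ring
              _ ≤ C₃ * t ^ ((k:ℝ) - 1) := by
                  refine mul_le_mul_of_nonneg_right ?_ h3'
                  rw [hC₃def]
                  linarith
          · refine le_trans (mul_le_mul_left (hJlarge t hcase) _) ?_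
            rw [← ENNReal.ofReal_mul (by positivity)]
            apply ofReal_le_ofReal
            have h3' : (0:ℝ) ≤ t ^ ((k:ℝ) - 1) := Real.rpow_nonneg ht0.le _
            have hM0 : (0:ℝ) ≤ M ^ (ℓ:ℝ) := Real.rpow_nonneg hMpos.le _
            calc 2 * (q ^ (ℓ:ℝ) / (ℓ:ℝ)) * t ^ ((k:ℝ) - 2) * t
                = (2 * (q ^ (ℓ:ℝ) / (ℓ:ℝ))) * t ^ ((k:ℝ) - 1) := by
                  rw [mul_assoc, hpow2]
              _ ≤ C₃ * t ^ ((k:ℝ) - 1) := by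
                  refine mul_le_mul_of_nonneg_right ?_ h3'
                  rw [hC₃def]
                  linarith
        calc (∫⁻ r in Ioo (0:ℝ) (min t q),
                ENNReal.ofReal (r ^ ((ℓ:ℝ) - 1) * ((t ^ 2 - r ^ 2) ^ ((k:ℝ)/2 - 1))))
              * ENNReal.ofReal (t * f₀ t)
            = ((∫⁻ r in Ioo (0:ℝ) (min t q),
                ENNReal.ofReal (r ^ ((ℓ:ℝ) - 1) * ((t ^ 2 - r ^ 2) ^ ((k:ℝ)/2 - 1))))
              * ENNReal.ofReal t) * ENNReal.ofReal (f₀ t) := by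
              rw [ENNReal.ofReal_mul ht0.le, mul_assoc]
          _ ≤ ENNReal.ofReal (C₃ * t ^ ((k:ℝ) - 1)) * ENNReal.ofReal (f₀ t) :=
              mul_le_mul_left key _
          _ = ENNReal.ofReal C₃ * ENNReal.ofReal (f₀ t * t ^ ((k:ℝ) - 1)) := by
              rw [← ENNReal.ofReal_mul
                (mul_nonneg hC₃0 (Real.rpow_nonneg ht0.le _)),
                ← ENNReal.ofReal_mul hC₃0]
              congr 1
              ring
      calc (∫⁻ t in Ici a, ∫⁻ r in Ioo (0:ℝ) q, Ψ (r, t))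
          ≤ ∫⁻ t in Ici a, ENNReal.ofReal C₃ * ENNReal.ofReal (f₀ t * t ^ ((k:ℝ) - 1)) :=
            setLIntegral_mono' measurableSet_Ici hb
        _ = ENNReal.ofReal C₃ * ∫⁻ t in Ici a, ENNReal.ofReal (f₀ t * t ^ ((k:ℝ) - 1)) :=
            lintegral_const_mul' _ _ ofReal_ne_top
        _ < ⊤ := by
            rw [← restrict_Ioi_eq_restrict_Ici]
            exact ENNReal.mul_lt_top ofReal_lt_top h2
  have hR : (∫⁻ r in Ioo (0:ℝ) q, ENNReal.ofReal (r ^ ((ℓ:ℝ) - 1)) * G r) < ⊤ := by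
    rw [h6]
    exact hfin
  have hD : (∫⁻ s in Ioo p q, ∫⁻ r in Ioo (0:ℝ) s,
      ENNReal.ofReal ((s ^ 2 - r ^ 2) ^ ((j:ℝ)/2 - 1) * r ^ ((ℓ:ℝ) - 1)) * G r) < ⊤ := by
    rw [h23]
    calc (∫⁻ r in Ioo (0:ℝ) q, ∫⁻ s in Ioo p q, H (s, r))
        ≤ ∫⁻ r in Ioo (0:ℝ) q, C₁ * (ENNReal.ofReal (r ^ ((ℓ:ℝ) - 1)) * G r) :=
          setLIntegral_mono' measurableSet_Ioo h45
      _ = C₁ * ∫⁻ r in Ioo (0:ℝ) q, ENNReal.ofReal (r ^ ((ℓ:ℝ) - 1)) * G r :=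
          lintegral_const_mul' _ _ hC₁ne
      _ < ⊤ := ENNReal.mul_lt_top hC₁ne.lt_top hR
  calc (∫⁻ s in Ioo p q, Ijk n j k ℓ f₀ s)
      ≤ ∫⁻ s in Ioo p q, ENNReal.ofReal (c₁ / p ^ ((n:ℝ) - (k:ℝ) - 2)) *
          ∫⁻ r in Ioo (0:ℝ) s,
            ENNReal.ofReal ((s ^ 2 - r ^ 2) ^ ((j:ℝ)/2 - 1) * r ^ ((ℓ:ℝ) - 1)) * G r := by
        refine setLIntegral_mono' measurableSet_Ioo fun s hs => ?_
        rw [goal_eq s]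
        refine mul_le_mul_left (ofReal_le_ofReal ?_) _
        have h1' : p ^ ((n:ℝ) - (k:ℝ) - 2) ≤ s ^ ((n:ℝ) - (k:ℝ) - 2) :=
          Real.rpow_le_rpow hp.le hs.1.le hE0
        have h2' : 0 < p ^ ((n:ℝ) - (k:ℝ) - 2) := Real.rpow_pos_of_pos hp _
        gcongr
    _ = ENNReal.ofReal (c₁ / p ^ ((n:ℝ) - (k:ℝ) - 2)) *
          ∫⁻ s in Ioo p q, ∫⁻ r in Ioo (0:ℝ) s,
            ENNReal.ofReal ((s ^ 2 - r ^ 2) ^ ((j:ℝ)/2 - 1) * r ^ ((ℓ:ℝ) - 1)) * G r :=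
        lintegral_const_mul' _ _ ofReal_ne_top
    _ < ⊤ := ENNReal.mul_lt_top ofReal_lt_top hD
end

section
/- For p ≥ (n−j)/k with j, k ≥ 1 and j+k < n, the function f(τ) = (2+|τ|)^{(j−n)/p} (log(2+|τ|))^{−1} on the affine Grassmannian of j-planes in ℝⁿ belongs to L^p but fails the condition ∫_{|τ|>a} |f(τ)| |τ|^{k+j−n} dτ < ∞ for every a > 0 (i.e. the integral diverges). -/
open MeasureTheory Set ENNReal Module Filter Metric

open MeasureTheory Set ENNReal Module Filter Metric

lemma polar_lintegral {E : Type*} [NormedAddCommGroup E] [NormedSpace ℝ E]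
    [MeasurableSpace E] [BorelSpace E] [Nontrivial E] [FiniteDimensional ℝ E]
    (μ : Measure E) [μ.IsAddHaarMeasure] (f : ℝ → ℝ≥0∞) (hf : Measurable f) :
    ∫⁻ x, f ‖x‖ ∂μ =
      μ.toSphere Set.univ *
        ∫⁻ y in Ioi (0:ℝ), ENNReal.ofReal (y ^ (finrank ℝ E - 1)) * f y := by
  have h0 : MeasurableSet ({(0:E)}ᶜ) := (measurableSet_singleton 0).compl
  calc ∫⁻ x, f ‖x‖ ∂μ
      = ∫⁻ x : ({(0:E)}ᶜ : Set E), f ‖(x:E)‖ ∂(μ.comap (↑)) := by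
        rw [lintegral_subtype_comap h0 (fun x => f ‖x‖),
          MeasureTheory.restrict_compl_singleton]
    _ = ∫⁻ x : sphere (0:E) 1 × Ioi (0:ℝ), f x.2
          ∂(μ.toSphere.prod (.volumeIoiPow (finrank ℝ E - 1))) := by
        rw [← μ.measurePreserving_homeomorphUnitSphereProd.lintegral_comp
          (f := fun x : sphere (0:E) 1 × Ioi (0:ℝ) => f x.2)
          (show Measurable fun x : sphere (0:E) 1 × Ioi (0:ℝ) => f x.2 from
            (hf.comp measurable_subtype_coe).comp measurable_snd)]
        exact lintegral_congr fun x => by rw [homeomorphUnitSphereProd_apply_snd_coe]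
    _ = μ.toSphere Set.univ *
          ∫⁻ r : Ioi (0:ℝ), f r ∂(Measure.volumeIoiPow (finrank ℝ E - 1)) := by
        rw [lintegral_prod _
          (show Measurable fun x : sphere (0:E) 1 × Ioi (0:ℝ) => f x.2 from
            (hf.comp measurable_subtype_coe).comp measurable_snd).aemeasurable]
        simp [lintegral_const, mul_comm]
    _ = _ := by
        rw [Measure.volumeIoiPow,
          lintegral_withDensity_eq_lintegral_mul _
            ((measurable_subtype_coe.pow_const _).ennreal_ofReal)
            (show Measurable fun r : Ioi (0:ℝ) => f r from hf.comp measurable_subtype_coe),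
          ← lintegral_subtype_comap measurableSet_Ioi
            (fun y : ℝ => ENNReal.ofReal (y ^ (finrank ℝ E - 1)) * f y)]
        rfl

lemma lintegral_prod_snd {α E : Type*} [MeasurableSpace α] [MeasurableSpace E]
    (μ : Measure α) [IsProbabilityMeasure μ] (ν : Measure E) [SigmaFinite ν]
    (F : E → ℝ≥0∞) (hF : Measurable F) :
    ∫⁻ τ : α × E, F τ.2 ∂(μ.prod ν) = ∫⁻ u, F u ∂ν := by
  rw [lintegral_prod _ (show Measurable fun τ : α × E => F τ.2 from hF.comp measurable_snd).aemeasurable]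
  simp [lintegral_const]

lemma oneD_finite {p : ℝ} (hp1 : 1 < p) :
    ∫⁻ y in Ioi (0:ℝ),
      ENNReal.ofReal ((2 + y)⁻¹ * Real.log (2 + y) ^ (-p)) < ⊤ := by
  set g1 : ℝ → ℝ := fun y => (2 + y)⁻¹ * Real.log (2 + y) ^ (-p) with hg1
  have hderiv : ∀ y ∈ Ici (0:ℝ), HasDerivAt
      (fun y => Real.log (2 + y) ^ (1 - p) / (1 - p)) (g1 y) y := by
    intro y hy
    have hy0 : (0:ℝ) ≤ y := hy
    have hA : (0:ℝ) < 2 + y := by linarith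
    have hL : 0 < Real.log (2 + y) := Real.log_pos (by linarith)
    have h1 : HasDerivAt (fun y : ℝ => 2 + y) 1 y := (hasDerivAt_id y).const_add 2
    have h2 : HasDerivAt (fun y : ℝ => Real.log (2 + y)) ((2 + y)⁻¹) y := by
      simpa [one_div] using h1.log hA.ne'
    have h3 := (h2.rpow_const (p := 1 - p) (Or.inl hL.ne')).div_const (1 - p)
    have h1p : (1:ℝ) - p ≠ 0 := by intro h; linarith [sub_eq_zero.mp h]
    refine h3.congr_deriv ?_
    rw [hg1]
    field_simp
    ring_nf
  have hnonneg : ∀ y ∈ Ioi (0:ℝ), 0 ≤ g1 y := by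
    intro y hy
    have hy0 : (0:ℝ) < y := hy
    have hA : (0:ℝ) < 2 + y := by linarith
    have h := Real.rpow_nonneg (Real.log_nonneg (show (1:ℝ) ≤ 2 + y by linarith)) (-p)
    positivity
  have htend : Tendsto (fun y => Real.log (2 + y) ^ (1 - p) / (1 - p)) atTop (nhds 0) := by
    have hlog : Tendsto (fun y : ℝ => Real.log (2 + y)) atTop atTop :=
      Real.tendsto_log_atTop.comp (tendsto_atTop_add_const_left _ 2 tendsto_id)
    have h0 : Tendsto (fun t : ℝ => t ^ (1 - p)) atTop (nhds 0) := by
      have := tendsto_rpow_neg_atTop (show 0 < p - 1 by linarith)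
      simpa [show -(p - 1) = 1 - p by ring] using this
    simpa using (h0.comp hlog).div_const (1 - p)
  have hint : IntegrableOn g1 (Ioi 0) :=
    integrableOn_Ioi_deriv_of_nonneg' hderiv hnonneg htend
  refine lt_of_le_of_lt (lintegral_mono fun y => ?_) hint.2
  rw [Real.enorm_eq_ofReal_abs]
  exact ENNReal.ofReal_le_ofReal (le_abs_self _)

lemma oneD_infinite {b : ℝ} (hb : 1 ≤ b) :
    ∫⁻ y in Ioi b, ENNReal.ofReal ((2 + y)⁻¹ * (Real.log (2 + y))⁻¹) = ⊤ := by
  set g : ℝ → ℝ := fun y => (2 + y)⁻¹ * (Real.log (2 + y))⁻¹ with hg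
  set F : ℝ → ℝ := fun y => Real.log (Real.log (2 + y)) with hF
  set L : ℝ≥0∞ := ∫⁻ y in Ioi b, ENNReal.ofReal (g y) with hL
  by_contra hne
  have hbound : ∀ x, b ≤ x → ENNReal.ofReal (F x - F b) ≤ L := by
    intro x hbx
    have hderiv : ∀ y ∈ uIcc b x, HasDerivAt F (g y) y := by
      intro y hy
      rw [uIcc_of_le hbx] at hy
      have hy1 : (1:ℝ) ≤ y := le_trans hb hy.1
      have hA : (0:ℝ) < 2 + y := by linarith
      have hLpos : 0 < Real.log (2 + y) := Real.log_pos (by linarith)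
      have h1 : HasDerivAt (fun y : ℝ => 2 + y) 1 y := (hasDerivAt_id y).const_add 2
      have h2 : HasDerivAt (fun y : ℝ => Real.log (2 + y)) ((2 + y)⁻¹) y := by
        simpa [one_div] using h1.log hA.ne'
      have h3 := h2.log hLpos.ne'
      simpa [hg, div_eq_mul_inv] using h3
    have hcont : ContinuousOn g (uIcc b x) := by
      rw [uIcc_of_le hbx]
      have hbase : ContinuousOn (fun y : ℝ => 2 + y) (Icc b x) :=
        (continuous_const.add continuous_id).continuousOn
      have hne1 : ∀ y ∈ Icc b x, (2:ℝ) + y ≠ 0 := fun y hy => by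
        have : (1:ℝ) ≤ y := le_trans hb hy.1; positivity
      have hlogc : ContinuousOn (fun y : ℝ => Real.log (2 + y)) (Icc b x) :=
        hbase.log hne1
      exact (hbase.inv₀ hne1).mul (hlogc.inv₀ (fun y hy => by
        have : (1:ℝ) ≤ y := le_trans hb hy.1
        exact (Real.log_pos (by linarith)).ne'))
    have hii : IntervalIntegrable g volume b x := hcont.intervalIntegrable
    have heq : ∫ y in b..x, g y = F x - F b :=
      intervalIntegral.integral_eq_sub_of_hasDerivAt hderiv hii
    have hIoc : IntegrableOn g (Ioc b x) := hii.1
    calc ENNReal.ofReal (F x - F b) = ENNReal.ofReal (∫ y in Ioc b x, g y) := by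
          rw [← heq, intervalIntegral.integral_of_le hbx]
      _ ≤ ∫⁻ y in Ioc b x, ENNReal.ofReal (g y) := by
          refine le_trans (Real.ofReal_le_enorm _) ?_
          refine le_trans (enorm_integral_le_lintegral_enorm _) (le_of_eq ?_)
          refine setLIntegral_congr_fun measurableSet_Ioc (fun y hy => ?_)
          have hy1 : (1:ℝ) ≤ y := le_trans hb hy.1.le
          have hA : (0:ℝ) < 2 + y := by linarith
          have hLpos : 0 < Real.log (2 + y) := Real.log_pos (by linarith)
          rw [Real.enorm_eq_ofReal (by positivity)]
      _ ≤ L := lintegral_mono_set Ioc_subset_Ioi_self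
  have htendF : Tendsto F atTop atTop := by
    have : Tendsto (fun y : ℝ => Real.log (2 + y)) atTop atTop :=
      Real.tendsto_log_atTop.comp (tendsto_atTop_add_const_left _ 2 tendsto_id)
    exact Real.tendsto_log_atTop.comp this
  obtain ⟨x, hx1, hx2⟩ :=
    ((htendF.eventually_gt_atTop (F b + L.toReal)).and (eventually_ge_atTop b)).exists
  have hlt : L < ENNReal.ofReal (F x - F b) := by
    rw [← ENNReal.ofReal_toReal hne]
    have h0 : (0:ℝ) ≤ L.toReal := ENNReal.toReal_nonneg
    exact (ENNReal.ofReal_lt_ofReal_iff (by linarith)).mpr (by linarith)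
  exact absurd (hbound x hx2) (not_le.mpr hlt)


set_option maxHeartbeats 1000000 in
set_option synthInstance.maxHeartbeats 400000 in
/-- Sharpness of the `L^p` existence condition: for `p ≥ (n−j)/k = m/k` the radial
function `f(τ) = (2+|τ|)^{(j−n)/p} (log(2+|τ|))^{−1}` on the affine Grassmannian of
`j`-planes in `ℝⁿ` (parametrized by `O(n) × ℝᵐ`, `m = n − j`, `|τ| = ‖u‖`) belongs to
`L^p` but `∫_{|τ|>a} |f(τ)| |τ|^{k+j−n} dτ = ∞` for every `a > 0`. -/
theorem lp_counterexample (j k m : ℕ) (hj : 1 ≤ j) (hk : 1 ≤ k) (hkm : k < m)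
    [MeasurableSpace (Matrix.orthogonalGroup (Fin (j + m)) ℝ)]
    (μ : Measure (Matrix.orthogonalGroup (Fin (j + m)) ℝ)) [μ.IsHaarMeasure]
    [IsProbabilityMeasure μ]
    (p : ℝ) (hp : (m : ℝ) / k ≤ p) :
    MemLp (fun τ : Matrix.orthogonalGroup (Fin (j + m)) ℝ × EuclideanSpace ℝ (Fin m) =>
        (2 + ‖τ.2‖) ^ (((j : ℝ) - ((j + m : ℕ) : ℝ)) / p) * (Real.log (2 + ‖τ.2‖))⁻¹)
      (ENNReal.ofReal p) (μ.prod volume) ∧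
    ∀ a > (0:ℝ),
      ∫⁻ τ in {τ : Matrix.orthogonalGroup (Fin (j + m)) ℝ ×
          EuclideanSpace ℝ (Fin m) | a < ‖τ.2‖},
        ENNReal.ofReal
          ((2 + ‖τ.2‖) ^ (((j : ℝ) - ((j + m : ℕ) : ℝ)) / p) *
            (Real.log (2 + ‖τ.2‖))⁻¹ * ‖τ.2‖ ^ ((k : ℝ) - m)) ∂(μ.prod volume) = ⊤ := by
  have hm1 : 1 ≤ m := by omega
  haveI : Nonempty (Fin m) := ⟨⟨0, by omega⟩⟩
  haveI : Nontrivial (EuclideanSpace ℝ (Fin m)) := inferInstance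
  have hk0 : (0:ℝ) < k := by exact_mod_cast hk
  have hkmR : (k:ℝ) < m := by exact_mod_cast hkm
  have hp1 : 1 < p := lt_of_lt_of_le ((one_lt_div hk0).mpr hkmR) hp
  have hp0 : (0:ℝ) < p := by linarith
  have hmp : (m:ℝ)/p ≤ k := by
    have h1 : (m:ℝ) ≤ p * k := (div_le_iff₀ hk0).mp hp
    rw [div_le_iff₀ hp0]; linarith
  have hexp : ((j:ℝ) - ((j + m : ℕ) : ℝ))/p = -((m:ℝ)/p) := by push_cast; ring
  have hfr : Module.finrank ℝ (EuclideanSpace ℝ (Fin m)) = m := finrank_euclideanSpace_fin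
  simp only [hexp]
  constructor
  · -- Memℒp
    have hcont : Continuous fun u : EuclideanSpace ℝ (Fin m) =>
        (2 + ‖u‖) ^ (-((m:ℝ)/p)) * (Real.log (2 + ‖u‖))⁻¹ := by
      have hbase : Continuous fun u : EuclideanSpace ℝ (Fin m) => 2 + ‖u‖ :=
        continuous_const.add continuous_norm
      have hlog : Continuous fun u : EuclideanSpace ℝ (Fin m) => Real.log (2 + ‖u‖) := by
        refine continuous_iff_continuousAt.2 fun u => ?_
        exact (Real.continuousAt_log (by positivity)).comp hbase.continuousAt
      refine (hbase.rpow_const fun u => Or.inl (by positivity)).mul (hlog.inv₀ fun u => ?_)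
      have h2 : (0:ℝ) ≤ ‖u‖ := norm_nonneg _
      exact (Real.log_pos (by linarith)).ne'
    refine ⟨(hcont.stronglyMeasurable.comp_measurable measurable_snd).aestronglyMeasurable, ?_⟩
    have hpne : ENNReal.ofReal p ≠ 0 := by
      simp only [ne_eq, ENNReal.ofReal_eq_zero, not_le]; linarith
    rw [eLpNorm_lt_top_iff_lintegral_rpow_enorm_lt_top hpne ENNReal.ofReal_ne_top,
      ENNReal.toReal_ofReal hp0.le]
    have hadd : Measurable fun y : ℝ => 2 + y := measurable_id.const_add 2
    have hrpowc : ∀ c : ℝ, Measurable fun t : ℝ => t ^ c := fun c => by measurability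
    have hmeas1 : Measurable fun y : ℝ =>
        ENNReal.ofReal ((2 + y) ^ (-(m:ℝ)) * Real.log (2 + y) ^ (-p)) :=
      Measurable.ennreal_ofReal (((hrpowc _).comp hadd).mul
        ((hrpowc _).comp (Real.measurable_log.comp hadd)))
    have hptwise : ∀ τ : Matrix.orthogonalGroup (Fin (j + m)) ℝ × EuclideanSpace ℝ (Fin m),
        (‖(2 + ‖τ.2‖) ^ (-((m:ℝ)/p)) * (Real.log (2 + ‖τ.2‖))⁻¹‖₊ : ℝ≥0∞) ^ p
          = ENNReal.ofReal ((2 + ‖τ.2‖) ^ (-(m:ℝ)) * Real.log (2 + ‖τ.2‖) ^ (-p)) := by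
      intro τ
      have hr : (0:ℝ) ≤ ‖τ.2‖ := norm_nonneg _
      have hA : (0:ℝ) < 2 + ‖τ.2‖ := by linarith
      have hL : 0 < Real.log (2 + ‖τ.2‖) := Real.log_pos (by linarith)
      have hgnn : 0 ≤ (2 + ‖τ.2‖) ^ (-((m:ℝ)/p)) * (Real.log (2 + ‖τ.2‖))⁻¹ := by positivity
      rw [← enorm_eq_nnnorm, Real.enorm_eq_ofReal hgnn, ENNReal.ofReal_rpow_of_nonneg hgnn hp0.le]
      congr 1
      rw [Real.mul_rpow (by positivity) (by positivity), ← Real.rpow_mul hA.le,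
        Real.inv_rpow hL.le, ← Real.rpow_neg hL.le,
        show -((m:ℝ)/p) * p = -(m:ℝ) by field_simp]
    calc ∫⁻ τ, (‖(2 + ‖τ.2‖) ^ (-((m:ℝ)/p)) * (Real.log (2 + ‖τ.2‖))⁻¹‖₊ : ℝ≥0∞) ^ p
          ∂(μ.prod volume)
        = ∫⁻ τ : Matrix.orthogonalGroup (Fin (j + m)) ℝ × EuclideanSpace ℝ (Fin m),
            ENNReal.ofReal ((2 + ‖τ.2‖) ^ (-(m:ℝ)) * Real.log (2 + ‖τ.2‖) ^ (-p))
              ∂(μ.prod volume) := lintegral_congr hptwise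
      _ = ∫⁻ u : EuclideanSpace ℝ (Fin m),
            ENNReal.ofReal ((2 + ‖u‖) ^ (-(m:ℝ)) * Real.log (2 + ‖u‖) ^ (-p)) ∂volume :=
          lintegral_prod_snd μ volume _ (hmeas1.comp measurable_norm)
      _ = (volume : Measure (EuclideanSpace ℝ (Fin m))).toSphere Set.univ *
            ∫⁻ y in Ioi (0:ℝ), ENNReal.ofReal (y ^ (m - 1)) *
              ENNReal.ofReal ((2 + y) ^ (-(m:ℝ)) * Real.log (2 + y) ^ (-p)) :=
          (polar_lintegral volume _ hmeas1).trans (by rw [hfr])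
      _ ≤ (volume : Measure (EuclideanSpace ℝ (Fin m))).toSphere Set.univ *
            ∫⁻ y in Ioi (0:ℝ), ENNReal.ofReal ((2 + y)⁻¹ * Real.log (2 + y) ^ (-p)) := by
          refine mul_le_mul_right ?_ _
          refine lintegral_mono_ae ?_
          filter_upwards [ae_restrict_mem measurableSet_Ioi] with y hy
          have hy0 : (0:ℝ) < y := hy
          have hA : (0:ℝ) < 2 + y := by linarith
          have hLnn : 0 ≤ Real.log (2 + y) ^ (-p) :=
            Real.rpow_nonneg (Real.log_nonneg (by linarith)) _
          rw [← ENNReal.ofReal_mul (by positivity)]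
          refine ENNReal.ofReal_le_ofReal ?_
          have h1 : y ^ (m - 1) ≤ (2 + y) ^ (m - 1) := pow_le_pow_left₀ hy0.le (by linarith) _
          have h2 : ((2 + y):ℝ) ^ (m - 1) = (2 + y) ^ ((m:ℝ) - 1) := by
            rw [← Real.rpow_natCast (2 + y) (m - 1), Nat.cast_sub hm1, Nat.cast_one]
          have h3 : (2 + y) ^ ((m:ℝ) - 1) * (2 + y) ^ (-(m:ℝ)) = (2 + y)⁻¹ := by
            rw [← Real.rpow_add hA, show (m:ℝ) - 1 + -(m:ℝ) = -1 by ring, Real.rpow_neg_one]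
          calc y ^ (m - 1) * ((2 + y) ^ (-(m:ℝ)) * Real.log (2 + y) ^ (-p))
              ≤ (2 + y) ^ (m - 1) * ((2 + y) ^ (-(m:ℝ)) * Real.log (2 + y) ^ (-p)) := by
                refine mul_le_mul_of_nonneg_right h1
                  (mul_nonneg (Real.rpow_nonneg hA.le _) hLnn)
            _ = (2 + y)⁻¹ * Real.log (2 + y) ^ (-p) := by
                rw [h2, ← mul_assoc, h3]
      _ < ⊤ := ENNReal.mul_lt_top (measure_lt_top _ _) (oneD_finite hp1)
  · -- divergence
    intro a ha
    have hb1 : (1:ℝ) ≤ max a 1 := le_max_right _ _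
    have hab : a ≤ max a 1 := le_max_left _ _
    have hadd : Measurable fun y : ℝ => 2 + y := measurable_id.const_add 2
    have hrpowc : ∀ c : ℝ, Measurable fun t : ℝ => t ^ c := fun c => by measurability
    have hGmeas : Measurable fun y : ℝ =>
        ENNReal.ofReal ((2 + y) ^ (-((m:ℝ)/p)) * (Real.log (2 + y))⁻¹ * y ^ ((k:ℝ) - m)) :=
      Measurable.ennreal_ofReal ((((hrpowc _).comp hadd).mul
        ((Real.measurable_log.comp hadd).inv)).mul (hrpowc _))
    have hset : {τ : Matrix.orthogonalGroup (Fin (j + m)) ℝ ×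
        EuclideanSpace ℝ (Fin m) | a < ‖τ.2‖}
        = Set.univ ×ˢ {u : EuclideanSpace ℝ (Fin m) | a < ‖u‖} := by
      ext ⟨x, u⟩; simp
    rw [hset, ← Measure.prod_restrict, Measure.restrict_univ]
    have hsmeas : MeasurableSet {u : EuclideanSpace ℝ (Fin m) | a < ‖u‖} :=
      (isOpen_lt continuous_const continuous_norm).measurableSet
    have key : ∫⁻ y in Ioi (max a 1), ENNReal.ofReal (y ^ (m - 1)) *
        (Ioi a).indicator (fun y => ENNReal.ofReal
          ((2 + y) ^ (-((m:ℝ)/p)) * (Real.log (2 + y))⁻¹ * y ^ ((k:ℝ) - m))) y = ⊤ := by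
      refine eq_top_iff.mpr ?_
      calc (⊤:ℝ≥0∞) = ENNReal.ofReal ((3:ℝ) ^ ((k:ℝ) - 1))⁻¹ *
            ∫⁻ y in Ioi (max a 1), ENNReal.ofReal ((2 + y)⁻¹ * (Real.log (2 + y))⁻¹) := by
            rw [oneD_infinite hb1, ENNReal.mul_top]
            simp only [ne_eq, ENNReal.ofReal_eq_zero, not_le]
            positivity
        _ = ∫⁻ y in Ioi (max a 1), ENNReal.ofReal ((3:ℝ) ^ ((k:ℝ) - 1))⁻¹ *
              ENNReal.ofReal ((2 + y)⁻¹ * (Real.log (2 + y))⁻¹) :=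
            (lintegral_const_mul' _ _ ENNReal.ofReal_ne_top).symm
        _ ≤ _ := by
            refine lintegral_mono_ae ?_
            filter_upwards [ae_restrict_mem measurableSet_Ioi] with y hy
            have hy1 : (1:ℝ) < y := lt_of_le_of_lt hb1 hy
            have hya : a < y := lt_of_le_of_lt hab hy
            have hy0 : (0:ℝ) < y := by linarith
            have hA : (0:ℝ) < 2 + y := by linarith
            have hLpos : 0 < Real.log (2 + y) := Real.log_pos (by linarith)
            rw [Set.indicator_of_mem (show y ∈ Ioi a from hya),
              ← ENNReal.ofReal_mul (by positivity),
              ← ENNReal.ofReal_mul (by positivity)]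
            refine ENNReal.ofReal_le_ofReal ?_
            have hcast : ((m - 1 : ℕ):ℝ) = (m:ℝ) - 1 := by
              rw [Nat.cast_sub hm1, Nat.cast_one]
            have hpow : (y:ℝ) ^ (m - 1) = y ^ ((m:ℝ) - 1) := by
              rw [← Real.rpow_natCast y (m - 1), hcast]
            have hk1 : (0:ℝ) ≤ (k:ℝ) - 1 := by
              have : (1:ℝ) ≤ k := by exact_mod_cast hk
              linarith
            have hRHS : y ^ (m - 1) * ((2 + y) ^ (-((m:ℝ)/p)) * (Real.log (2 + y))⁻¹ *
                y ^ ((k:ℝ) - m))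
                = y ^ ((k:ℝ) - 1) * ((2 + y) ^ (-((m:ℝ)/p)) * (Real.log (2 + y))⁻¹) := by
              have hyy : y ^ ((m:ℝ) - 1) * y ^ ((k:ℝ) - (m:ℝ)) = y ^ ((k:ℝ) - 1) := by
                rw [← Real.rpow_add hy0, show (m:ℝ) - 1 + ((k:ℝ) - (m:ℝ)) = (k:ℝ) - 1 by ring]
              calc y ^ (m - 1) * ((2 + y) ^ (-((m:ℝ)/p)) * (Real.log (2 + y))⁻¹ *
                    y ^ ((k:ℝ) - m))
                  = (y ^ ((m:ℝ) - 1) * y ^ ((k:ℝ) - (m:ℝ))) *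
                      ((2 + y) ^ (-((m:ℝ)/p)) * (Real.log (2 + y))⁻¹) := by
                    rw [hpow]; ring
                _ = _ := by rw [hyy]
            have h3 : (2 + y) ^ ((k:ℝ) - 1) * (2 + y) ^ (-(k:ℝ)) = (2 + y)⁻¹ := by
              rw [← Real.rpow_add hA, show (k:ℝ) - 1 + -(k:ℝ) = -1 by ring, Real.rpow_neg_one]
            have hLHS : ((3:ℝ) ^ ((k:ℝ) - 1))⁻¹ * ((2 + y)⁻¹ * (Real.log (2 + y))⁻¹)
                = ((2 + y)/3) ^ ((k:ℝ) - 1) *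
                    ((2 + y) ^ (-(k:ℝ)) * (Real.log (2 + y))⁻¹) := by
              rw [Real.div_rpow (by linarith) (by norm_num), ← h3]; ring
            have hstep1 : ((2 + y)/3) ^ ((k:ℝ) - 1) ≤ y ^ ((k:ℝ) - 1) :=
              Real.rpow_le_rpow (by positivity) (by linarith) hk1
            have hstep2 : (2 + y) ^ (-(k:ℝ)) ≤ (2 + y) ^ (-((m:ℝ)/p)) :=
              Real.rpow_le_rpow_of_exponent_le (by linarith) (by linarith)
            calc ((3:ℝ) ^ ((k:ℝ) - 1))⁻¹ * ((2 + y)⁻¹ * (Real.log (2 + y))⁻¹)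
                = ((2 + y)/3) ^ ((k:ℝ) - 1) *
                    ((2 + y) ^ (-(k:ℝ)) * (Real.log (2 + y))⁻¹) := hLHS
              _ ≤ y ^ ((k:ℝ) - 1) * ((2 + y) ^ (-((m:ℝ)/p)) * (Real.log (2 + y))⁻¹) := by
                  refine mul_le_mul hstep1
                    (mul_le_mul_of_nonneg_right hstep2 (inv_nonneg.mpr hLpos.le)) ?_
                    (Real.rpow_nonneg hy0.le _)
                  exact mul_nonneg (Real.rpow_nonneg hA.le _) (inv_nonneg.mpr hLpos.le)
              _ = y ^ (m - 1) * ((2 + y) ^ (-((m:ℝ)/p)) * (Real.log (2 + y))⁻¹ *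
                    y ^ ((k:ℝ) - m)) := hRHS.symm
    have h2 : ∫⁻ u in {u : EuclideanSpace ℝ (Fin m) | a < ‖u‖},
        ENNReal.ofReal ((2 + ‖u‖) ^ (-((m:ℝ)/p)) * (Real.log (2 + ‖u‖))⁻¹ *
          ‖u‖ ^ ((k:ℝ) - m)) ∂volume = ⊤ := by
      have hS0 : (volume : Measure (EuclideanSpace ℝ (Fin m))).toSphere Set.univ ≠ 0 := by
        rw [Measure.toSphere_apply_univ, hfr]
        exact mul_ne_zero (by exact_mod_cast Nat.cast_ne_zero.mpr (by omega))
          (measure_ball_pos _ _ one_pos).ne'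
      calc ∫⁻ u in {u : EuclideanSpace ℝ (Fin m) | a < ‖u‖},
            ENNReal.ofReal ((2 + ‖u‖) ^ (-((m:ℝ)/p)) * (Real.log (2 + ‖u‖))⁻¹ *
              ‖u‖ ^ ((k:ℝ) - m)) ∂volume
          = ∫⁻ u : EuclideanSpace ℝ (Fin m),
              ((Ioi a).indicator (fun y => ENNReal.ofReal
                ((2 + y) ^ (-((m:ℝ)/p)) * (Real.log (2 + y))⁻¹ * y ^ ((k:ℝ) - m)))) ‖u‖
              ∂volume := by
            rw [← lintegral_indicator hsmeas]
            refine lintegral_congr fun u => ?_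
            by_cases h : a < ‖u‖ <;> simp [Set.indicator, h]
        _ = (volume : Measure (EuclideanSpace ℝ (Fin m))).toSphere Set.univ *
              ∫⁻ y in Ioi (0:ℝ), ENNReal.ofReal (y ^ (m - 1)) *
                ((Ioi a).indicator (fun y => ENNReal.ofReal
                  ((2 + y) ^ (-((m:ℝ)/p)) * (Real.log (2 + y))⁻¹ * y ^ ((k:ℝ) - m)))) y :=
            (polar_lintegral volume _ (hGmeas.indicator measurableSet_Ioi)).trans (by rw [hfr])
        _ = ⊤ := by
            refine ENNReal.mul_eq_top.mpr (Or.inl ⟨hS0, ?_⟩)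
            refine eq_top_iff.mpr (le_trans key.ge (lintegral_mono_set fun y hy => ?_))
            exact lt_trans (by linarith : (0:ℝ) < max a 1) hy
    exact (lintegral_prod_snd μ _
      (fun u : EuclideanSpace ℝ (Fin m) => ENNReal.ofReal
        ((2 + ‖u‖) ^ (-((m:ℝ)/p)) * (Real.log (2 + ‖u‖))⁻¹ * ‖u‖ ^ ((k:ℝ) - m)))
      (hGmeas.comp measurable_norm)).trans h2
end
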